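/- Let k be a field, G a group, and X : Rep k G with underlying module V and action ρ. Suppose (V_g)_{g ∈ G} is a family of k-submodules of V forming an internal direct sum decomposition V = ⊕_{g∈G} V_g and satisfying the conjugation equivariance ρ(h)(V_g) = V_{h g h⁻¹} for all g, h ∈ G. Then there exists a unique half-braiding λ on X such that for every A : Rep k G with action ρ_A, every a ∈ A, every g ∈ G and every x ∈ V_g, one has λ_A(a ⊗ x) = x ⊗ ρ_A(g)a. -/

import Mathlib

open CategoryTheory CategoryTheory.MonoidalCategory TensorProduct
open scoped DirectSum

universe u

namespace HalfBraidingAux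

lemma HalfBraiding.ext' {C : Type*} [Category C] [MonoidalCategory C] {X : C}
    {l l' : HalfBraiding X} (h : l.β = l'.β) : l = l' := by
  cases l; cases l'; cases h; rfl

variable {k G : Type u} [Field k] [Group G] [DecidableEq G] (X : Rep k G)
  (W : G → Submodule k X) (hW : DirectSum.IsInternal W)

include hW

noncomputable def decomp : (⨁ g, W g) ≃ₗ[k] X :=
  LinearEquiv.ofBijective (DirectSum.coeLinearMap W) hW

lemma decomp_lof (g : G) (x : W g) :
    decomp X W hW (DirectSum.lof k G (fun g => W g) g x) = x := by
  simp [decomp, DirectSum.lof_eq_of, DirectSum.coeLinearMap_of]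
  exact DirectSum.coeLinearMap_of W g x

lemma extW {M : Type u} [AddCommGroup M] [Module k M] {f f' : X →ₗ[k] M}
    (h : ∀ (g : G) (x : X), x ∈ W g → f x = f' x) : f = f' := by
  have key : f.comp (decomp X W hW).toLinearMap = f'.comp (decomp X W hW).toLinearMap := by
    apply DirectSum.linearMap_ext
    intro i
    ext x
    simpa [decomp_lof] using h i x x.2
  refine LinearMap.ext fun v => ?_
  obtain ⟨d, rfl⟩ := (decomp X W hW).surjective v
  exact DFunLike.congr_fun key d

section maps

variable (A : Rep k G)

noncomputable def invF : X →ₗ[k] (A →ₗ[k] TensorProduct k X A) :=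
  (DirectSum.toModule k G _ fun g =>
      (LinearMap.lcomp k _ (A.ρ g)).comp
        ((TensorProduct.mk k X A).comp (W g).subtype)).comp
    (decomp X W hW).symm.toLinearMap

lemma invF_apply (g : G) (x : X) (hx : x ∈ W g) (a : A) :
    invF X W hW A x a = x ⊗ₜ[k] (A.ρ g a) := by
  have hd : (decomp X W hW).symm x = DirectSum.lof k G (fun g => W g) g ⟨x, hx⟩ := by
    rw [LinearEquiv.symm_apply_eq, decomp_lof]
  simp [invF, hd, DirectSum.toModule_lof]

noncomputable def invLin : TensorProduct k A X →ₗ[k] TensorProduct k X A :=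
  TensorProduct.lift (invF X W hW A).flip

lemma invLin_tmul (g : G) (x : X) (hx : x ∈ W g) (a : A) :
    invLin X W hW A (a ⊗ₜ[k] x) = x ⊗ₜ[k] (A.ρ g a) := by
  simp [invLin, invF_apply X W hW A g x hx]

noncomputable def homF : X →ₗ[k] (A →ₗ[k] TensorProduct k A X) :=
  (DirectSum.toModule k G _ fun g =>
      (LinearMap.lcomp k _ (A.ρ g⁻¹)).comp
        ((TensorProduct.mk k A X).flip.comp (W g).subtype)).comp
    (decomp X W hW).symm.toLinearMap

lemma homF_apply (g : G) (x : X) (hx : x ∈ W g) (a : A) :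
    homF X W hW A x a = (A.ρ g⁻¹ a) ⊗ₜ[k] x := by
  have hd : (decomp X W hW).symm x = DirectSum.lof k G (fun g => W g) g ⟨x, hx⟩ := by
    rw [LinearEquiv.symm_apply_eq, decomp_lof]
  simp [homF, hd, DirectSum.toModule_lof]

noncomputable def homLin : TensorProduct k X A →ₗ[k] TensorProduct k A X :=
  TensorProduct.lift (homF X W hW A)

lemma homLin_tmul (g : G) (x : X) (hx : x ∈ W g) (a : A) :
    homLin X W hW A (x ⊗ₜ[k] a) = (A.ρ g⁻¹ a) ⊗ₜ[k] x := by
  simp [homLin, homF_apply X W hW A g x hx]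

end maps

section ext

variable {N P M : Type u} [AddCommGroup N] [Module k N] [AddCommGroup P] [Module k P]
  [AddCommGroup M] [Module k M]

lemma extXA {f f' : TensorProduct k X N →ₗ[k] M}
    (h : ∀ (g : G) (x : X), x ∈ W g → ∀ n : N, f (x ⊗ₜ n) = f' (x ⊗ₜ n)) : f = f' := by
  apply TensorProduct.curry_injective
  refine extW X W hW fun g x hx => LinearMap.ext fun n => ?_
  simpa using h g x hx n

lemma extAX {f f' : TensorProduct k N X →ₗ[k] M}
    (h : ∀ (g : G) (x : X), x ∈ W g → ∀ n : N, f (n ⊗ₜ x) = f' (n ⊗ₜ x)) : f = f' := by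
  apply TensorProduct.curry_injective
  apply LinearMap.flip_inj
  refine extW X W hW fun g x hx => LinearMap.ext fun n => ?_
  simpa using h g x hx n

lemma extXAB {f f' : TensorProduct k X (TensorProduct k N P) →ₗ[k] M}
    (h : ∀ (g : G) (x : X), x ∈ W g → ∀ (n : N) (p : P),
      f (x ⊗ₜ (n ⊗ₜ p)) = f' (x ⊗ₜ (n ⊗ₜ p))) : f = f' := by
  apply TensorProduct.curry_injective
  refine extW X W hW fun g x hx => TensorProduct.ext' fun n p => ?_
  simpa using h g x hx n p

end ext

variable (hconj : ∀ g h : G, (W g).map (X.ρ h) = W (h * g * h⁻¹))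

include hconj

set_option linter.unusedSectionVars false in
lemma mem_conj {g : G} (h : G) {x : X} (hx : x ∈ W g) :
    X.ρ h x ∈ W (h * g * h⁻¹) := by
  rw [← hconj g h]
  exact Submodule.mem_map_of_mem hx

noncomputable def bHom (A : Rep k G) : X ⊗ A ⟶ A ⊗ X :=
  ConcreteCategory.ofHom (C := Rep k G) (X := X ⊗ A) (Y := A ⊗ X)
  ⟨homLin X W hW A, fun h => by
    refine extXA X W hW fun g x hx a => ?_
    show homLin X W hW A (TensorProduct.map (X.ρ h) (A.ρ h) (x ⊗ₜ a)) =
      TensorProduct.map (A.ρ h) (X.ρ h) (homLin X W hW A (x ⊗ₜ a))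
    rw [TensorProduct.map_tmul, homLin_tmul X W hW A g x hx,
      homLin_tmul X W hW A _ _ (mem_conj X W hW hconj h hx), TensorProduct.map_tmul]
    congr 1
    rw [← Module.End.mul_apply, ← Module.End.mul_apply, ← map_mul, ← map_mul]
    congr 1
    group⟩

noncomputable def bInv (A : Rep k G) : A ⊗ X ⟶ X ⊗ A :=
  ConcreteCategory.ofHom (C := Rep k G) (X := A ⊗ X) (Y := X ⊗ A)
  ⟨invLin X W hW A, fun h => by
    refine extAX X W hW fun g x hx a => ?_
    show invLin X W hW A (TensorProduct.map (A.ρ h) (X.ρ h) (a ⊗ₜ x)) =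
      TensorProduct.map (X.ρ h) (A.ρ h) (invLin X W hW A (a ⊗ₜ x))
    rw [TensorProduct.map_tmul, invLin_tmul X W hW A g x hx,
      invLin_tmul X W hW A _ _ (mem_conj X W hW hconj h hx), TensorProduct.map_tmul]
    congr 1
    rw [← Module.End.mul_apply, ← Module.End.mul_apply, ← map_mul, ← map_mul]
    congr 1
    group⟩

noncomputable def theHB : HalfBraiding X where
  β A :=
    { hom := bHom X W hW hconj A
      inv := bInv X W hW hconj A
      hom_inv_id := by
        apply Rep.hom_ext
        apply Representation.IntertwiningMap.ext
        refine extXA X W hW fun g x hx a => ?_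
        show invLin X W hW A (homLin X W hW A (x ⊗ₜ a)) = x ⊗ₜ a
        rw [homLin_tmul X W hW A g x hx, invLin_tmul X W hW A g x hx]
        rw [← Module.End.mul_apply, ← map_mul, mul_inv_cancel, map_one, Module.End.one_apply]
      inv_hom_id := by
        apply Rep.hom_ext
        apply Representation.IntertwiningMap.ext
        refine extAX X W hW fun g x hx a => ?_
        show homLin X W hW A (invLin X W hW A (a ⊗ₜ x)) = a ⊗ₜ x
        rw [invLin_tmul X W hW A g x hx, homLin_tmul X W hW A g x hx]
        rw [← Module.End.mul_apply, ← map_mul, inv_mul_cancel, map_one, Module.End.one_apply] }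
  monoidal A B := by
    apply Rep.hom_ext
    apply Representation.IntertwiningMap.ext
    refine extXAB X W hW (N := A.V) (P := B.V) fun g x hx a b => ?_
    show homLin X W hW (A ⊗ B) (x ⊗ₜ[k] (a ⊗ₜ[k] b)) = _
    rw [homLin_tmul X W hW (A ⊗ B) g x hx (a ⊗ₜ[k] b)]
    show _ = (α_ A B X).inv.hom ((A ◁ (bHom X W hW hconj B)).hom
        ((α_ A X B).hom.hom ((homLin X W hW A (x ⊗ₜ[k] a)) ⊗ₜ[k] b)))
    rw [homLin_tmul X W hW A g x hx a]
    show _ = (α_ A B X).inv.hom ((A.ρ g⁻¹) a ⊗ₜ[k] (homLin X W hW B (x ⊗ₜ[k] b)))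
    rw [homLin_tmul X W hW B g x hx b]
    rfl
  naturality {A B} f := by
    apply Rep.hom_ext
    apply Representation.IntertwiningMap.ext
    refine extXA X W hW fun g x hx a => ?_
    show homLin X W hW B (TensorProduct.map LinearMap.id f.hom.toLinearMap (x ⊗ₜ a)) =
      TensorProduct.map f.hom.toLinearMap LinearMap.id (homLin X W hW A (x ⊗ₜ a))
    rw [TensorProduct.map_tmul, LinearMap.id_apply, homLin_tmul X W hW B g x hx,
      homLin_tmul X W hW A g x hx, TensorProduct.map_tmul, LinearMap.id_apply]
    congr 1
    exact (Rep.hom_comm_apply f g⁻¹ a).symm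

end HalfBraidingAux

open HalfBraidingAux in
theorem halfBraiding_of_conjugation_equivariant_grading
    {k G : Type u} [Field k] [Group G] [DecidableEq G] (X : Rep k G)
    (W : G → Submodule k X)
    (hW : DirectSum.IsInternal W)
    (hconj : ∀ g h : G, (W g).map (X.ρ h) = W (h * g * h⁻¹)) :
    ∃! l : HalfBraiding X,
      ∀ (A : Rep k G) (a : A) (g : G) (x : X), x ∈ W g →
        (l.β A).inv.hom (a ⊗ₜ[k] x) = x ⊗ₜ[k] (A.ρ g a) := by
  refine ⟨theHB X W hW hconj, fun A a g x hx => invLin_tmul X W hW A g x hx a, ?_⟩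
  intro l hl
  apply HalfBraiding.ext'
  funext A
  refine Iso.ext ((Iso.inv_eq_inv _ _).mp ?_)
  apply Rep.hom_ext
  apply Representation.IntertwiningMap.ext
  refine extAX X W hW fun g x hx a => ?_
  exact (hl A a g x hx).trans (invLin_tmul X W hW A g x hx a).symm
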